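/- Let H be the operator (Hv)(y) = −v''(y) − (1/y)v'(y) + V(y)v(y)/y² with V(y) = (y⁴−6y²+1)/(1+y²)². There exist constants c > 0 and C > 0 such that for every smooth compactly supported radial function v on (0,∞): ∫₀^∞ |Hv(y)|² / (y²(1+|log y|²)) · y dy ≥ c·[ ∫₀^∞ |v''(y)|²/(y²(1+|log y|²)) · y dy + ∫₀^∞ |v'(y)|²/(y²(1+|log y|²)(1+y²)) · y dy + ∫₀^∞ |v(y)|²/(y⁴(1+|log y|²)(1+y²)) · y dy ] − C·[ ∫₀^∞ |v'(y)|²/(1+y⁶) · y dy + ∫₀^∞ |v(y)|²/(1+y⁸) · y dy ]. -/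

import Mathlib

open Real MeasureTheory Set

/-- The potential `V(y) = (y⁴ - 6y² + 1)/(1+y²)²`. -/
noncomputable def Vfun (y : ℝ) : ℝ := (y ^ 4 - 6 * y ^ 2 + 1) / (1 + y ^ 2) ^ 2

/-- The linearized operator `(Hv)(y) = -v'' - v'/y + V v/y²`. -/
noncomputable def Hop (v : ℝ → ℝ) : ℝ → ℝ :=
  fun y => -(deriv (deriv v) y) - (1 / y) * deriv v y + Vfun y * v y / y ^ 2

noncomputable def rr (t : ℝ) : ℝ := (1 + t ^ 2)⁻¹
noncomputable def rr1 (t : ℝ) : ℝ := -(2 * t) / (1 + t ^ 2) ^ 2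
noncomputable def rr2 (t : ℝ) : ℝ := (6 * t ^ 2 - 2) / (1 + t ^ 2) ^ 3
noncomputable def sg (t : ℝ) : ℝ := Real.exp (6 * t) / (1 + Real.exp (8 * t))
noncomputable def qq (t : ℝ) : ℝ := 8 * Real.exp (2 * t) / (1 + Real.exp (2 * t)) ^ 2
noncomputable def rB (t : ℝ) : ℝ := Real.exp (2 * t) / ((1 + Real.exp (2 * t)) * (1 + t ^ 2))

lemma one_add_sq_pos (t : ℝ) : (0:ℝ) < 1 + t ^ 2 := by positivity

lemma hasDerivAt_rr (t : ℝ) : HasDerivAt rr (rr1 t) t := by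
  have h : HasDerivAt (fun t : ℝ => 1 + t ^ 2) (2 * t) t := by
    simpa using (hasDerivAt_pow 2 t).const_add 1
  have := h.inv (ne_of_gt (one_add_sq_pos t))
  exact this

lemma hasDerivAt_rr1 (t : ℝ) : HasDerivAt rr1 (rr2 t) t := by
  have hnum : HasDerivAt (fun t : ℝ => -(2 * t)) (-2) t := by
    exact ((hasDerivAt_id t).const_mul (2:ℝ)).neg.congr_deriv (by norm_num)
  have hden : HasDerivAt (fun t : ℝ => (1 + t ^ 2) ^ 2) (2 * (1 + t ^ 2) * (2 * t)) t := by
    have h : HasDerivAt (fun t : ℝ => 1 + t ^ 2) (2 * t) t := by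
      simpa using (hasDerivAt_pow 2 t).const_add 1
    have := (hasDerivAt_pow 2 ((1:ℝ) + t ^ 2)).comp t h
    exact this.congr_deriv (by norm_num)
  have hd2 : ((1:ℝ) + t ^ 2) ^ 2 ≠ 0 := by positivity
  have := hnum.div hden hd2
  refine this.congr_deriv ?_
  unfold rr2
  field_simp
  ring

lemma cont_rr : Continuous rr := by
  apply Continuous.inv₀ (by continuity) (fun t => ne_of_gt (one_add_sq_pos t))

lemma cont_rr1 : Continuous rr1 := by
  apply Continuous.div (by continuity) (by continuity)
  intro t; positivity

lemma cont_rr2 : Continuous rr2 := by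
  apply Continuous.div (by continuity) (by continuity)
  intro t; positivity

lemma cont_sg : Continuous sg := by
  apply Continuous.div (by continuity) (by continuity)
  intro t; positivity

lemma cont_qq : Continuous qq := by
  apply Continuous.div (by continuity) (by continuity)
  intro t; positivity

lemma cont_rB : Continuous rB := by
  apply Continuous.div (by continuity) (by continuity)
  intro t; positivity

lemma rr_pos (t : ℝ) : 0 < rr t := by unfold rr; positivity
lemma rr_le_one (t : ℝ) : rr t ≤ 1 := by
  unfold rr
  rw [inv_le_one_iff₀]
  right; nlinarith [sq_nonneg t]
lemma sg_pos (t : ℝ) : 0 < sg t := by unfold sg; positivity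
lemma rB_nonneg (t : ℝ) : 0 ≤ rB t := by unfold rB; positivity
lemma qq_nonneg (t : ℝ) : 0 ≤ qq t := by unfold qq; positivity

lemma rB_le_rr (t : ℝ) : rB t ≤ rr t := by
  unfold rB rr
  rw [div_le_iff₀ (by positivity)]
  rw [inv_eq_one_div, div_mul_eq_mul_div, le_div_iff₀ (one_add_sq_pos t)]
  have := (Real.exp_pos (2*t)).le
  nlinarith [one_add_sq_pos t]

lemma P1 (t : ℝ) : rr1 t ≤ rr t := by
  unfold rr1 rr
  rw [div_le_iff₀ (by positivity), inv_eq_one_div, div_mul_eq_mul_div,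
    le_div_iff₀ (one_add_sq_pos t)]
  nlinarith [sq_nonneg (t + 1), one_add_sq_pos t, sq_nonneg t]

lemma exp18_le : Real.exp 18 ≤ 3 ^ (18:ℕ) := by
  have h0 : Real.exp 1 ^ (18:ℕ) = Real.exp (18:ℕ) := Real.exp_one_pow 18
  have h1 : Real.exp 1 ^ (18:ℕ) ≤ 3 ^ (18:ℕ) :=
    pow_le_pow_left₀ (Real.exp_pos 1).le (by linarith [Real.exp_one_lt_d9]) 18
  calc Real.exp 18 = Real.exp 1 ^ (18:ℕ) := by rw [h0]; norm_num
    _ ≤ _ := h1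

lemma exp_neg18 : ((3:ℝ) ^ (18:ℕ))⁻¹ ≤ Real.exp (-18) := by
  have h := mul_le_mul_of_nonneg_right exp18_le (Real.exp_pos (-18)).le
  rw [← Real.exp_add] at h
  norm_num at h
  rw [inv_le_iff_one_le_mul₀ (by positivity)]
  linarith

lemma sg_lb_mid {t : ℝ} (h1 : -3 ≤ t) (h2 : t ≤ 0) : Real.exp (-18) / 2 ≤ sg t := by
  unfold sg
  apply div_le_div₀ (Real.exp_pos _).le
  · exact Real.exp_le_exp.mpr (by linarith)
  · positivity
  · have : Real.exp (8 * t) ≤ 1 := Real.exp_le_one_iff.mpr (by linarith)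
    linarith

lemma P2 (t : ℝ) : 0 ≤ 8 * rr t - 12 * rr1 t + 3 * rr2 t + 10 ^ 13 * sg t := by
  have hpos : (0:ℝ) < 1 + t ^ 2 := one_add_sq_pos t
  have hrw : 8 * rr t - 12 * rr1 t + 3 * rr2 t
      = (8*(1+t^2)^2 + 24*t*(1+t^2) + (18*t^2-6)) / (1+t^2)^3 := by
    unfold rr rr1 rr2; field_simp; ring
  rw [hrw]
  rcases le_or_gt 0 t with ht | ht
  · have h1 : (0:ℝ) ≤ 8*(1+t^2)^2 + 24*t*(1+t^2) + (18*t^2-6) := by nlinarith [sq_nonneg t]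
    have := sg_pos t
    positivity
  rcases le_or_gt t (-3) with ht3 | ht3
  · have h1 : (0:ℝ) ≤ 8*(1+t^2)^2 + 24*t*(1+t^2) + (18*t^2-6) := by
      nlinarith [mul_nonneg (by nlinarith [sq_nonneg t] : (0:ℝ) ≤ -t^3) (by linarith : (0:ℝ) ≤ -(t+3)),
        sq_nonneg (t+1), sq_nonneg t]
    have := sg_pos t
    positivity
  · have hcube : (1:ℝ) ≤ (1+t^2)^3 := one_le_pow₀ (by nlinarith [sq_nonneg t])
    have hnum : -(1000:ℝ) ≤ 8*(1+t^2)^2 + 24*t*(1+t^2) + (18*t^2-6) := by nlinarith [sq_nonneg t, sq_nonneg (t+1)]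
    have hfrac : -(1000:ℝ) ≤ (8*(1+t^2)^2 + 24*t*(1+t^2) + (18*t^2-6)) / (1+t^2)^3 := by
      rw [le_div_iff₀ (by positivity)]
      nlinarith [hnum, hcube]
    have hsg := sg_lb_mid ht3.le ht.le
    have h318 : (10:ℝ)^13 * (Real.exp (-18)/2) ≥ 1000 := by
      have := exp_neg18
      rw [ge_iff_le]
      calc (1000:ℝ) ≤ 10^13 * (((3:ℝ) ^ (18:ℕ))⁻¹ / 2) := by norm_num
        _ ≤ 10^13 * (Real.exp (-18)/2) := by
            apply mul_le_mul_of_nonneg_left _ (by norm_num)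
            linarith
    nlinarith [mul_le_mul_of_nonneg_left hsg (by norm_num : (0:ℝ) ≤ 10^13)]

lemma P3 (t : ℝ) : qq t ^ 2 ≤ 1/4 + 1024 * sg t := by
  set E := Real.exp (2*t) with hEdef
  have hE : 0 < E := Real.exp_pos _
  have h6 : Real.exp (6*t) = E ^ 3 := by
    rw [hEdef, ← Real.exp_nat_mul]; push_cast; ring_nf
  have h8 : Real.exp (8*t) = E ^ 4 := by
    rw [hEdef, ← Real.exp_nat_mul]; push_cast; ring_nf
  have hsg : sg t = E^3 / (1 + E^4) := by unfold sg; rw [h6, h8]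
  have hq : qq t = 8 * E / (1 + E)^2 := rfl
  rw [hsg, hq]
  have hpoly : 256*E^2*(1+E^4) ≤ (1+E)^4*(1+E^4) + 4096*E^3*(1+E)^4 := by
    nlinarith [mul_nonneg hE.le (sq_nonneg (E - 1/64)), sq_nonneg E, pow_pos hE 3,
      pow_pos hE 4, pow_pos hE 5, pow_pos hE 6, pow_pos hE 7, pow_pos hE 8,
      mul_nonneg (pow_nonneg hE.le 3) (sq_nonneg (E-1))]
  have hd1 : (0:ℝ) < (1+E)^2 := by positivity
  have hd2 : (0:ℝ) < 1 + E^4 := by positivity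
  have expand : 1/4 + 1024*(E^3/(1+E^4)) - (8*E/(1+E)^2)^2
      = ((1+E)^4*(1+E^4) + 4096*E^3*(1+E)^4 - 256*E^2*(1+E^4))
        / (4*((1+E)^2)^2*(1+E^4)) := by
    field_simp
    ring
  nlinarith [expand, div_nonneg (by linarith : (0:ℝ) ≤ (1+E)^4*(1+E^4) + 4096*E^3*(1+E)^4 - 256*E^2*(1+E^4)) (by positivity : (0:ℝ) ≤ 4*((1+E)^2)^2*(1+E^4))]

lemma hcs_aux {u g : ℝ → ℝ} (hu : HasCompactSupport u) (h : ∀ t, t ∉ tsupport u → g t = 0) :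
    HasCompactSupport g := by
  apply IsCompact.of_isClosed_subset hu (isClosed_tsupport g)
  apply closure_minimal _ (isClosed_tsupport u)
  intro t ht
  simp only [Function.mem_support] at ht
  by_contra h2
  exact ht (h t h2)

lemma integral_deriv_zero' {Φ Φ' : ℝ → ℝ} (hd : ∀ t, HasDerivAt Φ (Φ' t) t)
    (hc : Continuous Φ') (hcs : HasCompactSupport Φ) : ∫ t, Φ' t = 0 := by
  have hΦd : deriv Φ = Φ' := funext fun t => (hd t).deriv
  have hdiff : Differentiable ℝ Φ := fun t => (hd t).differentiableAt
  have hcd : ContDiff ℝ 1 Φ := contDiff_one_iff_deriv.mpr ⟨hdiff, by rw [hΦd]; exact hc⟩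
  have hInt : Integrable (deriv Φ) := by
    rw [hΦd]; exact hc.integrable_of_hasCompactSupport (by rw [← hΦd]; exact hcs.deriv)
  have h1 := HasCompactSupport.integral_Iic_deriv_eq hcd hcs 0
  have h2 := HasCompactSupport.integral_Ioi_deriv_eq hcd hcs 0
  have h3 := integral_add_compl (measurableSet_Iic : MeasurableSet (Iic (0:ℝ))) hInt
  rw [compl_Iic] at h3
  rw [← hΦd, ← h3, h1, h2]
  ring

lemma core (u u1 u2 : ℝ → ℝ) (hu : Continuous u) (hu1 : Continuous u1) (hu2 : Continuous u2)
    (hd1 : ∀ t, HasDerivAt u (u1 t) t) (hd2 : ∀ t, HasDerivAt u1 (u2 t) t)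
    (hcs : HasCompactSupport u) :
    (1/2) * (∫ t, (u2 t)^2 * rr t) + 3 * (∫ t, (u1 t)^2 * rr t)
      + (1/4) * (∫ t, (u t)^2 * rr t) - 10^13 * (∫ t, (u t)^2 * sg t)
    ≤ ∫ t, (u2 t + 4*u1 t + 3*u t + qq t * u t)^2 * rr t := by
  have hu1eq : u1 = deriv u := funext fun t => ((hd1 t).deriv).symm
  have hu2eq : u2 = deriv u1 := funext fun t => ((hd2 t).deriv).symm
  have hsupp1 : Function.support u1 ⊆ tsupport u := by
    rw [hu1eq]; exact support_deriv_subset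
  have hts1 : tsupport u1 ⊆ tsupport u := closure_minimal hsupp1 (isClosed_tsupport u)
  have hsupp2 : Function.support u2 ⊆ tsupport u := by
    rw [hu2eq]; exact support_deriv_subset.trans hts1
  have hzero : ∀ t, t ∉ tsupport u → u t = 0 ∧ u1 t = 0 ∧ u2 t = 0 := by
    intro t ht
    refine ⟨image_eq_zero_of_notMem_tsupport ht, ?_, ?_⟩
    · by_contra h; exact ht (hsupp1 h)
    · by_contra h; exact ht (hsupp2 h)
  have mkI : ∀ g : ℝ → ℝ, Continuous g → (∀ t, u t = 0 → u1 t = 0 → u2 t = 0 → g t = 0) →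
      Integrable g := by
    intro g hg hvan
    refine hg.integrable_of_hasCompactSupport (hcs_aux hcs ?_)
    intro t ht
    obtain ⟨h1, h2, h3⟩ := hzero t ht
    exact hvan t h1 h2 h3
  have hcrr := cont_rr; have hcrr1 := cont_rr1; have hcrr2 := cont_rr2
  have hcsg := cont_sg; have hcqq := cont_qq
  have I22 : Integrable (fun t => (u2 t)^2 * rr t) :=
    mkI _ ((hu2.pow 2).mul hcrr) (fun t h1 h2 h3 => by rw [h3]; ring)
  have I11 : Integrable (fun t => (u1 t)^2 * rr t) :=
    mkI _ ((hu1.pow 2).mul hcrr) (fun t h1 h2 h3 => by rw [h2]; ring)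
  have I00 : Integrable (fun t => (u t)^2 * rr t) :=
    mkI _ ((hu.pow 2).mul hcrr) (fun t h1 h2 h3 => by rw [h1]; ring)
  have IS : Integrable (fun t => (u t)^2 * sg t) :=
    mkI _ ((hu.pow 2).mul hcsg) (fun t h1 h2 h3 => by rw [h1]; ring)
  have Iga : Integrable (fun t => (u2 t + 4*u1 t + 3*u t)^2 * rr t) :=
    mkI _ ((((hu2.add (continuous_const.mul hu1)).add (continuous_const.mul hu)).pow 2).mul hcrr)
      (fun t h1 h2 h3 => by rw [h1, h2, h3]; ring)
  have IL : Integrable (fun t => (u2 t + 4*u1 t + 3*u t + qq t * u t)^2 * rr t) :=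
    mkI _ (((((hu2.add (continuous_const.mul hu1)).add (continuous_const.mul hu)).add
      (hcqq.mul hu)).pow 2).mul hcrr)
      (fun t h1 h2 h3 => by rw [h1, h2, h3]; ring)
  have Igq : Integrable (fun t => (qq t)^2 * (u t)^2 * rr t) :=
    mkI _ (((hcqq.pow 2).mul (hu.pow 2)).mul hcrr) (fun t h1 h2 h3 => by rw [h1]; ring)
  have Icomb : Integrable (fun t => (u2 t)^2 * rr t + 10*(u1 t)^2 * rr t + 9*(u t)^2 * rr t
      - 4*(u1 t)^2 * rr1 t - 12*(u t)^2 * rr1 t + 3*(u t)^2 * rr2 t) :=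
    mkI _ (by fun_prop) (fun t h1 h2 h3 => by rw [h1, h2, h3]; ring)
  have IDpsi : Integrable (fun t => 8*u1 t*u2 t*rr t + 6*u2 t*u t*rr t + 24*u1 t*u t*rr t
      + 6*(u1 t)^2*rr t + 4*(u1 t)^2*rr1 t + 12*(u t)^2*rr1 t - 3*(u t)^2*rr2 t) :=
    mkI _ (by fun_prop) (fun t h1 h2 h3 => by rw [h1, h2, h3]; ring)
  have Ilow : Integrable (fun t => (u2 t)^2*rr t + 6*(u1 t)^2*rr t + (u t)^2*rr t
      - 10^13*(u t)^2*sg t) :=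
    mkI _ (by fun_prop) (fun t h1 h2 h3 => by rw [h1, h2, h3]; ring)
  have hu1sq : ∀ t, HasDerivAt (fun s => (u1 s)^2) (2*u1 t*u2 t) t := by
    intro t
    have := (hd2 t).pow 2
    norm_num at this
    exact this
  have husq : ∀ t, HasDerivAt (fun s => (u s)^2) (2*u t*u1 t) t := by
    intro t
    have := (hd1 t).pow 2
    norm_num at this
    exact this
  have hPsi : ∀ t, HasDerivAt
      (fun s => 4*(u1 s)^2*rr s + 12*(u s)^2*rr s + 6*(u1 s * u s)*rr s - 3*(u s)^2*rr1 s)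
      (8*u1 t*u2 t*rr t + 6*u2 t*u t*rr t + 24*u1 t*u t*rr t
        + 6*(u1 t)^2*rr t + 4*(u1 t)^2*rr1 t + 12*(u t)^2*rr1 t - 3*(u t)^2*rr2 t) t := by
    intro t
    have h1 : HasDerivAt (fun s => (u1 s)^2 * rr s) ((2*u1 t*u2 t)*rr t + (u1 t)^2*rr1 t) t :=
      (hu1sq t).mul (hasDerivAt_rr t)
    have h2 : HasDerivAt (fun s => (u s)^2 * rr s) ((2*u t*u1 t)*rr t + (u t)^2*rr1 t) t :=
      (husq t).mul (hasDerivAt_rr t)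
    have h3 : HasDerivAt (fun s => (u1 s * u s) * rr s)
        ((u2 t * u t + u1 t * u1 t)*rr t + (u1 t * u t)*rr1 t) t :=
      (((hd2 t).mul (hd1 t))).mul (hasDerivAt_rr t)
    have h4 : HasDerivAt (fun s => (u s)^2 * rr1 s) ((2*u t*u1 t)*rr1 t + (u t)^2*rr2 t) t :=
      (husq t).mul (hasDerivAt_rr1 t)
    have hsum := (((h1.const_mul (4:ℝ)).add (h2.const_mul (12:ℝ))).add
      (h3.const_mul (6:ℝ))).sub (h4.const_mul (3:ℝ))
    refine (hsum.congr_deriv (by ring)).congr_of_eventuallyEq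
      (Filter.Eventually.of_forall fun s => by simp only [Pi.add_apply, Pi.sub_apply]; ring)
  have hzero2 : ∫ t, (8*u1 t*u2 t*rr t + 6*u2 t*u t*rr t + 24*u1 t*u t*rr t
      + 6*(u1 t)^2*rr t + 4*(u1 t)^2*rr1 t + 12*(u t)^2*rr1 t - 3*(u t)^2*rr2 t) = 0 := by
    refine integral_deriv_zero' hPsi (by fun_prop) (hcs_aux hcs ?_)
    intro t ht
    obtain ⟨h1, h2, h3⟩ := hzero t ht
    show 4*(u1 t)^2*rr t + 12*(u t)^2*rr t + 6*(u1 t * u t)*rr t - 3*(u t)^2*rr1 t = 0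
    rw [h1, h2]; ring
  have hgacomb : (∫ t, (u2 t + 4*u1 t + 3*u t)^2 * rr t)
      = ∫ t, ((u2 t)^2 * rr t + 10*(u1 t)^2 * rr t + 9*(u t)^2 * rr t
        - 4*(u1 t)^2 * rr1 t - 12*(u t)^2 * rr1 t + 3*(u t)^2 * rr2 t) := by
    rw [show (fun t => (u2 t + 4*u1 t + 3*u t)^2 * rr t)
      = (fun t => (8*u1 t*u2 t*rr t + 6*u2 t*u t*rr t + 24*u1 t*u t*rr t
          + 6*(u1 t)^2*rr t + 4*(u1 t)^2*rr1 t + 12*(u t)^2*rr1 t - 3*(u t)^2*rr2 t)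
        + ((u2 t)^2 * rr t + 10*(u1 t)^2 * rr t + 9*(u t)^2 * rr t
          - 4*(u1 t)^2 * rr1 t - 12*(u t)^2 * rr1 t + 3*(u t)^2 * rr2 t))
      from funext fun t => by ring]
    rw [integral_add IDpsi Icomb, hzero2, zero_add]
  have hcomblow : (∫ t, ((u2 t)^2*rr t + 6*(u1 t)^2*rr t + (u t)^2*rr t - 10^13*(u t)^2*sg t))
      ≤ ∫ t, ((u2 t)^2 * rr t + 10*(u1 t)^2 * rr t + 9*(u t)^2 * rr t
        - 4*(u1 t)^2 * rr1 t - 12*(u t)^2 * rr1 t + 3*(u t)^2 * rr2 t) := by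
    apply integral_mono Ilow Icomb
    intro t
    simp only
    have hP1 : 0 ≤ (u1 t)^2 * (rr t - rr1 t) :=
      mul_nonneg (sq_nonneg _) (sub_nonneg.mpr (P1 t))
    have hP2 : 0 ≤ (u t)^2 * (8*rr t - 12*rr1 t + 3*rr2 t + 10^13*sg t) :=
      mul_nonneg (sq_nonneg _) (P2 t)
    nlinarith [hP1, hP2]
  have hlowsplit : (∫ t, ((u2 t)^2*rr t + 6*(u1 t)^2*rr t + (u t)^2*rr t - 10^13*(u t)^2*sg t))
      = (∫ t, (u2 t)^2*rr t) + 6*(∫ t, (u1 t)^2*rr t) + (∫ t, (u t)^2*rr t)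
        - 10^13*(∫ t, (u t)^2*sg t) := by
    rw [show (fun t => (u2 t)^2*rr t + 6*(u1 t)^2*rr t + (u t)^2*rr t - 10^13*(u t)^2*sg t)
      = (fun t => (((u2 t)^2*rr t + 6*((u1 t)^2*rr t)) + (u t)^2*rr t) - 10^13*((u t)^2*sg t))
      from funext fun t => by ring]
    have Ic6 : Integrable (fun t => 6*((u1 t)^2*rr t)) := I11.const_mul 6
    have IcS : Integrable (fun t => (10:ℝ)^13*((u t)^2*sg t)) := IS.const_mul _
    have Isum1 : Integrable (fun t => (u2 t)^2*rr t + 6*((u1 t)^2*rr t)) := by exact I22.add Ic6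
    have Isum2 : Integrable (fun t => (u2 t)^2*rr t + 6*((u1 t)^2*rr t) + (u t)^2*rr t) := by
      exact Isum1.add I00
    rw [integral_sub Isum2 IcS, integral_add Isum1 I00, integral_add I22 Ic6,
      integral_const_mul, integral_const_mul]
  have hstep1 : (∫ t, ((1/2)*((u2 t + 4*u1 t + 3*u t)^2*rr t) - (qq t)^2*(u t)^2*rr t))
      ≤ ∫ t, (u2 t + 4*u1 t + 3*u t + qq t * u t)^2 * rr t := by
    apply integral_mono ((Iga.const_mul (1/2)).sub Igq) IL
    intro t
    simp only [Pi.sub_apply]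
    nlinarith [mul_nonneg (sq_nonneg (u2 t + 4*u1 t + 3*u t + 2*(qq t*u t))) (rr_pos t).le]
  have hsplit1 : (∫ t, ((1/2)*((u2 t + 4*u1 t + 3*u t)^2*rr t) - (qq t)^2*(u t)^2*rr t))
      = (1/2)*(∫ t, (u2 t + 4*u1 t + 3*u t)^2*rr t) - ∫ t, (qq t)^2*(u t)^2*rr t := by
    have Iha : Integrable (fun t => (1/2)*((u2 t + 4*u1 t + 3*u t)^2*rr t)) := Iga.const_mul _
    rw [integral_sub Iha Igq, integral_const_mul]
  have hgq : (∫ t, (qq t)^2*(u t)^2*rr t)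
      ≤ ∫ t, ((1/4)*((u t)^2*rr t) + 1024*((u t)^2*sg t)) := by
    apply integral_mono Igq ((I00.const_mul _).add (IS.const_mul _))
    intro t
    simp only [Pi.add_apply]
    have h3 := P3 t
    have h4 := rr_le_one t
    have h5 := (rr_pos t).le
    have h6 := (sg_pos t).le
    have hA : (qq t)^2*((u t)^2*rr t) ≤ (1/4 + 1024*sg t)*((u t)^2*rr t) :=
      mul_le_mul_of_nonneg_right h3 (mul_nonneg (sq_nonneg _) h5)
    have hB : 0 ≤ sg t*(u t)^2*(1 - rr t) :=
      mul_nonneg (mul_nonneg h6 (sq_nonneg _)) (by linarith)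
    nlinarith [hA, hB]
  have hsplit2 : (∫ t, ((1/4)*((u t)^2*rr t) + 1024*((u t)^2*sg t)))
      = (1/4)*(∫ t, (u t)^2*rr t) + 1024*(∫ t, (u t)^2*sg t) := by
    have Ih1 : Integrable (fun t => (1/4)*((u t)^2*rr t)) := I00.const_mul _
    have Ih2 : Integrable (fun t => (1024:ℝ)*((u t)^2*sg t)) := IS.const_mul _
    rw [integral_add Ih1 Ih2, integral_const_mul, integral_const_mul]
  have hW : 0 ≤ ∫ t, (u t)^2*sg t :=
    integral_nonneg (fun t => mul_nonneg (sq_nonneg _) (sg_pos t).le)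
  linarith [hstep1, hsplit1, hgacomb, hcomblow, hlowsplit, hgq, hsplit2, hW]

lemma cov {G : ℝ → ℝ} (hG : ContinuousOn G (Set.Ioi 0)) {a b : ℝ} (ha : 0 < a) (hab : a ≤ b)
    (h0 : ∀ y, y ∉ Set.Icc a b → G y = 0) :
    ∫ y in Set.Ioi (0:ℝ), G y = ∫ t, G (Real.exp t) * Real.exp t := by
  have hb : 0 < b := lt_of_lt_of_le ha hab
  have ha2 : 0 < a/2 := by linarith
  have hIcc : ∀ y, G y ≠ 0 → a ≤ y ∧ y ≤ b := by
    intro y hy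
    by_contra hmem
    apply hy
    apply h0
    intro hy2
    exact hmem ⟨hy2.1, hy2.2⟩
  have h1 : ∫ y in Set.Ioi (0:ℝ), G y = ∫ y, G y := by
    apply setIntegral_eq_integral_of_forall_compl_eq_zero
    intro y hy
    apply h0
    intro hy2
    exact hy (lt_of_lt_of_le ha hy2.1)
  have h2 : Function.support G ⊆ Set.Ioc (a/2) b := by
    intro y hy
    obtain ⟨hy1, hy2⟩ := hIcc y hy
    exact ⟨by linarith, hy2⟩
  have h3 : Function.support (fun t => G (Real.exp t) * Real.exp t)
      ⊆ Set.Ioc (Real.log (a/2)) (Real.log b) := by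
    intro t ht
    have hne : G (Real.exp t) ≠ 0 := by
      intro h
      apply ht
      simp [h]
    obtain ⟨hy1, hy2⟩ := hIcc _ hne
    constructor
    · have : Real.log (a/2) < Real.log a := Real.log_lt_log ha2 (by linarith)
      have h4 : Real.log a ≤ Real.log (Real.exp t) := Real.log_le_log ha hy1
      rw [Real.log_exp] at h4
      linarith
    · have h4 : Real.log (Real.exp t) ≤ Real.log b := Real.log_le_log (Real.exp_pos t) hy2
      rwa [Real.log_exp] at h4
  rw [h1, ← intervalIntegral.integral_eq_integral_of_support_subset h2,
    ← intervalIntegral.integral_eq_integral_of_support_subset h3]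
  have h4 := intervalIntegral.integral_comp_smul_deriv' (f := Real.exp) (f' := Real.exp) (g := G)
    (a := Real.log (a/2)) (b := Real.log b)
    (fun x _ => Real.hasDerivAt_exp x) continuous_exp.continuousOn
    (hG.mono (by rintro _ ⟨x, _, rfl⟩; exact Real.exp_pos x))
  rw [Real.exp_log ha2, Real.exp_log hb] at h4
  rw [← h4]
  apply intervalIntegral.integral_congr
  intro x _
  simp [mul_comm]

lemma exp_two (t : ℝ) : Real.exp (2*t) = (Real.exp t)^2 := by
  rw [← Real.exp_nat_mul]; push_cast; ring_nf

lemma exp_six (t : ℝ) : Real.exp (6*t) = (Real.exp t)^6 := by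
  rw [← Real.exp_nat_mul]; push_cast; ring_nf

lemma exp_eight (t : ℝ) : Real.exp (8*t) = (Real.exp t)^8 := by
  rw [← Real.exp_nat_mul]; push_cast; ring_nf

lemma ptA (x y z r : ℝ) (hr : 0 ≤ r) :
    (x + 3*y + 2*z)^2 * r ≤ 3*(x^2*r) + 27*(y^2*r) + 12*(z^2*r) := by
  nlinarith [mul_nonneg (sq_nonneg (x - 3*y)) hr, mul_nonneg (sq_nonneg (x - 2*z)) hr,
    mul_nonneg (sq_nonneg (3*y - 2*z)) hr]

lemma ptB (x z r ρ : ℝ) (h1 : 0 ≤ ρ) (h2 : ρ ≤ r) :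
    (x + 2*z)^2 * ρ ≤ 2*(x^2*r) + 8*(z^2*r) := by
  nlinarith [mul_nonneg (sq_nonneg (x - 2*z)) h1, sq_nonneg (x+2*z), sq_nonneg (x-2*z),
    mul_nonneg (sq_nonneg (x+2*z)) (sub_nonneg.mpr h2)]

set_option maxHeartbeats 3200000 in
/-- The logarithmically weighted subcoercivity estimate for `H`: there are constants
`c, C > 0` such that for every smooth compactly supported radial function `v` on `(0,∞)`,
the weighted `L²` norm of `Hv` controls weighted norms of `v''`, `v'`, `v` up to lower
order terms. All integrals are against the 2D radial measure `y dy`. -/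
theorem subcoercivity_of_H :
    ∃ c C : ℝ, 0 < c ∧ 0 < C ∧
      ∀ v : ℝ → ℝ, ContDiff ℝ (⊤ : ℕ∞) v → HasCompactSupport v →
        tsupport v ⊆ Set.Ioi 0 →
        (∫ y in Set.Ioi (0:ℝ), (Hop v y) ^ 2 / (y ^ 2 * (1 + (Real.log y) ^ 2)) * y)
          ≥ c * ((∫ y in Set.Ioi (0:ℝ),
                (deriv (deriv v) y) ^ 2 / (y ^ 2 * (1 + (Real.log y) ^ 2)) * y)
              + (∫ y in Set.Ioi (0:ℝ),
                (deriv v y) ^ 2 / (y ^ 2 * (1 + (Real.log y) ^ 2) * (1 + y ^ 2)) * y)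
              + (∫ y in Set.Ioi (0:ℝ),
                (v y) ^ 2 / (y ^ 4 * (1 + (Real.log y) ^ 2) * (1 + y ^ 2)) * y))
            - C * ((∫ y in Set.Ioi (0:ℝ), (deriv v y) ^ 2 / (1 + y ^ 6) * y)
              + (∫ y in Set.Ioi (0:ℝ), (v y) ^ 2 / (1 + y ^ 8) * y)) := by
  refine ⟨1/116, 10^13, by norm_num, by norm_num, ?_⟩
  intro v hv hcsv hsuppv
  -- differentiability and continuity facts
  have hvd : Differentiable ℝ v := hv.differentiable (by simp)
  have hv1 : ContDiff ℝ (⊤ : ℕ∞) (deriv v) := (contDiff_infty_iff_deriv.mp hv).2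
  have hvd1 : Differentiable ℝ (deriv v) := hv1.differentiable (by simp)
  have hcv : Continuous v := hv.continuous
  have hcv1 : Continuous (deriv v) := hv1.continuous
  have hcv2 : Continuous (deriv (deriv v)) := ((contDiff_infty_iff_deriv.mp hv1).2).continuous
  -- support bracket
  obtain ⟨a, b, ha, hab, hsub⟩ : ∃ a b : ℝ, 0 < a ∧ a ≤ b ∧ tsupport v ⊆ Set.Icc a b := by
    rcases (tsupport v).eq_empty_or_nonempty with h | h
    · exact ⟨1, 1, one_pos, le_refl _, by rw [h]; exact Set.empty_subset _⟩
    · refine ⟨sInf (tsupport v), sSup (tsupport v), ?_, ?_, ?_⟩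
      · exact hsuppv (IsCompact.sInf_mem hcsv h)
      · exact csInf_le_csSup h (IsCompact.bddBelow hcsv) (IsCompact.bddAbove hcsv)
      · intro x hx
        exact ⟨csInf_le (IsCompact.bddBelow hcsv) hx, le_csSup (IsCompact.bddAbove hcsv) hx⟩
  -- vanishing outside [a,b]
  have hsupd1 : Function.support (deriv v) ⊆ tsupport v := support_deriv_subset
  have htsd1 : tsupport (deriv v) ⊆ tsupport v := closure_minimal hsupd1 (isClosed_tsupport v)
  have hsupd2 : Function.support (deriv (deriv v)) ⊆ tsupport v :=
    support_deriv_subset.trans htsd1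
  have hvan : ∀ y, y ∉ Set.Icc a b → v y = 0 ∧ deriv v y = 0 ∧ deriv (deriv v) y = 0 := by
    intro y hy
    have hyt : y ∉ tsupport v := fun h => hy (hsub h)
    refine ⟨image_eq_zero_of_notMem_tsupport hyt, ?_, ?_⟩
    · by_contra h; exact hyt (hsupd1 h)
    · by_contra h; exact hyt (hsupd2 h)
  -- t-space functions
  set U : ℝ → ℝ := fun t => v (Real.exp t) / (Real.exp t)^2 with hU
  set U1 : ℝ → ℝ := fun t => deriv v (Real.exp t) / Real.exp t
      - 2*(v (Real.exp t) / (Real.exp t)^2) with hU1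
  set U2 : ℝ → ℝ := fun t => deriv (deriv v) (Real.exp t)
      - 3*(deriv v (Real.exp t) / Real.exp t) + 4*(v (Real.exp t) / (Real.exp t)^2) with hU2
  have hcU : Continuous U := by
    rw [hU]
    exact (hcv.comp Real.continuous_exp).div (Real.continuous_exp.pow 2)
      (fun t => by positivity)
  have hcU1 : Continuous U1 := by
    rw [hU1]
    exact ((hcv1.comp Real.continuous_exp).div Real.continuous_exp
      (fun t => (Real.exp_pos t).ne')).sub (continuous_const.mul
        ((hcv.comp Real.continuous_exp).div (Real.continuous_exp.pow 2) (fun t => by positivity)))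
  have hcU2 : Continuous U2 := by
    rw [hU2]
    exact ((hcv2.comp Real.continuous_exp).sub (continuous_const.mul
      ((hcv1.comp Real.continuous_exp).div Real.continuous_exp
        (fun t => (Real.exp_pos t).ne')))).add (continuous_const.mul
        ((hcv.comp Real.continuous_exp).div (Real.continuous_exp.pow 2) (fun t => by positivity)))
  have hdU1 : ∀ t, HasDerivAt U (U1 t) t := by
    intro t
    have hE := Real.exp_pos t
    have hc : HasDerivAt (fun s : ℝ => v (Real.exp s)) (deriv v (Real.exp t) * Real.exp t) t :=
      ((hvd (Real.exp t)).hasDerivAt).comp t (Real.hasDerivAt_exp t)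
    have hp : HasDerivAt (fun s : ℝ => (Real.exp s)^2)
        ((2:ℕ) * (Real.exp t)^(2-1) * Real.exp t) t := (Real.hasDerivAt_exp t).pow 2
    have hdiv := hc.div hp (by positivity)
    rw [hU]
    refine hdiv.congr_deriv ?_
    rw [hU1]
    field_simp
    ring
  have hdU2 : ∀ t, HasDerivAt U1 (U2 t) t := by
    intro t
    have hE := Real.exp_pos t
    have hc1 : HasDerivAt (fun s : ℝ => deriv v (Real.exp s))
        (deriv (deriv v) (Real.exp t) * Real.exp t) t :=
      ((hvd1 (Real.exp t)).hasDerivAt).comp t (Real.hasDerivAt_exp t)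
    have hq1 := hc1.div (Real.hasDerivAt_exp t) (ne_of_gt hE)
    have hcomb := hq1.sub ((hdU1 t).const_mul (2:ℝ))
    rw [hU1]
    refine hcomb.congr_deriv ?_
    rw [hU2, hU1]
    field_simp
    ring
  have hcsU : HasCompactSupport U := by
    apply HasCompactSupport.intro (isCompact_Icc (a := Real.log a) (b := Real.log b))
    intro t ht
    have hnot : Real.exp t ∉ Set.Icc a b := by
      intro hmem
      apply ht
      constructor
      · have := Real.log_le_log ha hmem.1
        rwa [Real.log_exp] at this
      · have := Real.log_le_log (Real.exp_pos t) hmem.2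
        rwa [Real.log_exp] at this
    rw [hU]
    simp only
    rw [(hvan _ hnot).1]
    ring

  -- y-side continuity pieces
  have hlogC : ContinuousOn Real.log (Set.Ioi (0:ℝ)) :=
    fun y hy => (Real.continuousAt_log (ne_of_gt hy)).continuousWithinAt
  have hwC : ContinuousOn (fun y : ℝ => y^2*(1+Real.log y^2)) (Set.Ioi 0) :=
    ((continuous_pow 2).continuousOn).mul (continuousOn_const.add (hlogC.pow 2))
  have hwne : ∀ y ∈ Set.Ioi (0:ℝ), y^2*(1+Real.log y^2) ≠ 0 := by
    intro y hy
    have h0 : (0:ℝ) < y := hy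
    positivity
  have hVc : Continuous Vfun := by
    unfold Vfun
    exact Continuous.div (((continuous_pow 4).sub (continuous_const.mul (continuous_pow 2))).add
      continuous_const) ((continuous_const.add (continuous_pow 2)).pow 2)
      (fun y => by positivity)
  have hHopC : ContinuousOn (Hop v) (Set.Ioi 0) := by
    unfold Hop
    apply ContinuousOn.add
    · apply ContinuousOn.sub
      · exact hcv2.continuousOn.neg
      · exact ((continuousOn_const.div continuousOn_id (fun y hy => ne_of_gt hy)).mul
          hcv1.continuousOn)
    · exact (hVc.continuousOn.mul hcv.continuousOn).div ((continuous_pow 2).continuousOn)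
        (fun y hy => by have h0 : (0:ℝ) < y := hy; positivity)
  have hEx : ∀ t : ℝ, Real.exp t ≠ 0 := fun t => (Real.exp_pos t).ne'
  have hOne : ∀ t : ℝ, (1:ℝ) + (Real.exp t)^2 ≠ 0 := fun t => by positivity
  -- the five change-of-variables identities
  have hLeq : (∫ y in Set.Ioi (0:ℝ), (Hop v y) ^ 2 / (y ^ 2 * (1 + (Real.log y) ^ 2)) * y)
      = ∫ t, (U2 t + 4*U1 t + 3*U t + qq t * U t)^2 * rr t := by
    rw [cov (G := fun y => (Hop v y) ^ 2 / (y ^ 2 * (1 + (Real.log y) ^ 2)) * y)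
      (((hHopC.pow 2).div hwC hwne).mul continuousOn_id) ha hab ?van]
    case van =>
      intro y hy
      obtain ⟨h1, h2, h3⟩ := hvan y hy
      have hH0 : Hop v y = 0 := by unfold Hop; rw [h1, h2, h3]; ring
      simp [hH0]
    congr 1
    funext t
    show (Hop v (Real.exp t)) ^ 2 / ((Real.exp t) ^ 2 * (1 + (Real.log (Real.exp t)) ^ 2))
        * Real.exp t * Real.exp t = (U2 t + 4*U1 t + 3*U t + qq t * U t)^2 * rr t
    have hq2 : qq t = 8*(Real.exp t)^2/(1+(Real.exp t)^2)^2 := by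
      unfold qq; rw [exp_two]
    have hinner : Hop v (Real.exp t) = -(U2 t + 4*U1 t + 3*U t + qq t * U t) := by
      simp only [hU, hU1, hU2, hq2]
      unfold Hop Vfun
      field_simp
      ring
    rw [Real.log_exp, hinner]
    unfold rr
    field_simp
  have hAeq : (∫ y in Set.Ioi (0:ℝ),
        (deriv (deriv v) y) ^ 2 / (y ^ 2 * (1 + (Real.log y) ^ 2)) * y)
      = ∫ t, (U2 t + 3*U1 t + 2*U t)^2 * rr t := by
    rw [cov (G := fun y => (deriv (deriv v) y) ^ 2 / (y ^ 2 * (1 + (Real.log y) ^ 2)) * y)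
      (((hcv2.pow 2).continuousOn.div hwC hwne).mul continuousOn_id) ha hab ?van]
    case van =>
      intro y hy
      simp [(hvan y hy).2.2]
    congr 1
    funext t
    show (deriv (deriv v) (Real.exp t)) ^ 2
        / ((Real.exp t) ^ 2 * (1 + (Real.log (Real.exp t)) ^ 2)) * Real.exp t * Real.exp t
      = (U2 t + 3*U1 t + 2*U t)^2 * rr t
    rw [Real.log_exp]
    simp only [hU, hU1, hU2]
    unfold rr
    field_simp
    ring
  have hBeq : (∫ y in Set.Ioi (0:ℝ),
        (deriv v y) ^ 2 / (y ^ 2 * (1 + (Real.log y) ^ 2) * (1 + y ^ 2)) * y)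
      = ∫ t, (U1 t + 2*U t)^2 * rB t := by
    rw [cov (G := fun y => (deriv v y) ^ 2 / (y ^ 2 * (1 + (Real.log y) ^ 2) * (1 + y ^ 2)) * y)
      (((hcv1.pow 2).continuousOn.div
        (hwC.mul (continuousOn_const.add (continuous_pow 2).continuousOn))
        (fun y hy => by have h0 : (0:ℝ) < y := hy
                        have := hwne y hy
                        simp only [Pi.add_apply, Pi.mul_apply]
                        positivity)).mul continuousOn_id) ha hab ?van]
    case van =>
      intro y hy
      simp [(hvan y hy).2.1]
    congr 1
    funext t
    show (deriv v (Real.exp t)) ^ 2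
        / ((Real.exp t) ^ 2 * (1 + (Real.log (Real.exp t)) ^ 2) * (1 + (Real.exp t) ^ 2))
          * Real.exp t * Real.exp t
      = (U1 t + 2*U t)^2 * rB t
    rw [Real.log_exp]
    simp only [hU, hU1]
    unfold rB
    rw [exp_two]
    field_simp
    ring
  have hDeq : (∫ y in Set.Ioi (0:ℝ),
        (v y) ^ 2 / (y ^ 4 * (1 + (Real.log y) ^ 2) * (1 + y ^ 2)) * y)
      = ∫ t, (U t)^2 * rB t := by
    rw [cov (G := fun y => (v y) ^ 2 / (y ^ 4 * (1 + (Real.log y) ^ 2) * (1 + y ^ 2)) * y)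
      (((hcv.pow 2).continuousOn.div
        ((((continuous_pow 4).continuousOn).mul
          (continuousOn_const.add (hlogC.pow 2))).mul
            (continuousOn_const.add (continuous_pow 2).continuousOn))
        (fun y hy => by have h0 : (0:ℝ) < y := hy; simp only [Pi.add_apply, Pi.mul_apply, Pi.pow_apply]; positivity)).mul continuousOn_id) ha hab ?van]
    case van =>
      intro y hy
      simp [(hvan y hy).1]
    congr 1
    funext t
    show (v (Real.exp t)) ^ 2
        / ((Real.exp t) ^ 4 * (1 + (Real.log (Real.exp t)) ^ 2) * (1 + (Real.exp t) ^ 2))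
          * Real.exp t * Real.exp t
      = (U t)^2 * rB t
    rw [Real.log_exp]
    simp only [hU]
    unfold rB
    rw [exp_two]
    field_simp
  have hFeq : (∫ y in Set.Ioi (0:ℝ), (v y) ^ 2 / (1 + y ^ 8) * y)
      = ∫ t, (U t)^2 * sg t := by
    rw [cov (G := fun y => (v y) ^ 2 / (1 + y ^ 8) * y)
      (((hcv.pow 2).continuousOn.div (continuousOn_const.add (continuous_pow 8).continuousOn)
        (fun y hy => by have h0 : (0:ℝ) < y := hy; simp only [Pi.add_apply, Pi.mul_apply]; positivity)).mul continuousOn_id) ha hab ?van]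
    case van =>
      intro y hy
      simp [(hvan y hy).1]
    congr 1
    funext t
    show (v (Real.exp t)) ^ 2 / (1 + (Real.exp t) ^ 8) * Real.exp t * Real.exp t
      = (U t)^2 * sg t
    simp only [hU]
    unfold sg
    rw [exp_six, exp_eight]
    field_simp

  -- t-space integrability
  have hvanT : ∀ t, t ∉ Set.Icc (Real.log a) (Real.log b) →
      U t = 0 ∧ U1 t = 0 ∧ U2 t = 0 := by
    intro t ht
    have hnot : Real.exp t ∉ Set.Icc a b := by
      intro hmem
      apply ht
      constructor
      · have := Real.log_le_log ha hmem.1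
        rwa [Real.log_exp] at this
      · have := Real.log_le_log (Real.exp_pos t) hmem.2
        rwa [Real.log_exp] at this
    obtain ⟨h1, h2, h3⟩ := hvan _ hnot
    refine ⟨?_, ?_, ?_⟩ <;> simp only [hU, hU1, hU2] <;> rw [h1] <;> try rw [h2]
    · ring
    · ring
    · rw [h3]; ring
  have mkI : ∀ g : ℝ → ℝ, Continuous g →
      (∀ t, t ∉ Set.Icc (Real.log a) (Real.log b) → g t = 0) → Integrable g := by
    intro g hg hzg
    exact hg.integrable_of_hasCompactSupport (HasCompactSupport.intro isCompact_Icc hzg)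
  have I22 : Integrable (fun t => (U2 t)^2*rr t) :=
    mkI _ ((hcU2.pow 2).mul cont_rr) (fun t ht => by rw [(hvanT t ht).2.2]; ring)
  have I11 : Integrable (fun t => (U1 t)^2*rr t) :=
    mkI _ ((hcU1.pow 2).mul cont_rr) (fun t ht => by rw [(hvanT t ht).2.1]; ring)
  have I00 : Integrable (fun t => (U t)^2*rr t) :=
    mkI _ ((hcU.pow 2).mul cont_rr) (fun t ht => by rw [(hvanT t ht).1]; ring)
  have IA : Integrable (fun t => (U2 t + 3*U1 t + 2*U t)^2*rr t) :=
    mkI _ ((((hcU2.add (continuous_const.mul hcU1)).add (continuous_const.mul hcU)).pow 2).mul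
      cont_rr) (fun t ht => by
        obtain ⟨h1, h2, h3⟩ := hvanT t ht
        rw [h1, h2, h3]; ring)
  have IB : Integrable (fun t => (U1 t + 2*U t)^2*rB t) :=
    mkI _ (((hcU1.add (continuous_const.mul hcU)).pow 2).mul cont_rB) (fun t ht => by
      obtain ⟨h1, h2, h3⟩ := hvanT t ht
      rw [h1, h2]; ring)
  have ID : Integrable (fun t => (U t)^2*rB t) :=
    mkI _ ((hcU.pow 2).mul cont_rB) (fun t ht => by rw [(hvanT t ht).1]; ring)
  -- bounds
  have hA2 : (∫ t, (U2 t + 3*U1 t + 2*U t)^2*rr t)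
      ≤ 3*(∫ t, (U2 t)^2*rr t) + 27*(∫ t, (U1 t)^2*rr t) + 12*(∫ t, (U t)^2*rr t) := by
    have Isum1 : Integrable (fun t => 3*((U2 t)^2*rr t) + 27*((U1 t)^2*rr t)) := by
      exact (I22.const_mul 3).add (I11.const_mul 27)
    have Isum : Integrable (fun t => 3*((U2 t)^2*rr t) + 27*((U1 t)^2*rr t)
        + 12*((U t)^2*rr t)) := by exact Isum1.add (I00.const_mul 12)
    calc (∫ t, (U2 t + 3*U1 t + 2*U t)^2*rr t)
        ≤ ∫ t, (3*((U2 t)^2*rr t) + 27*((U1 t)^2*rr t) + 12*((U t)^2*rr t)) :=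
          integral_mono IA Isum (fun t => ptA (U2 t) (U1 t) (U t) (rr t) (rr_pos t).le)
      _ = 3*(∫ t, (U2 t)^2*rr t) + 27*(∫ t, (U1 t)^2*rr t) + 12*(∫ t, (U t)^2*rr t) := by
          rw [integral_add Isum1 (I00.const_mul 12), integral_add (I22.const_mul 3)
            (I11.const_mul 27), integral_const_mul, integral_const_mul, integral_const_mul]
  have hB2 : (∫ t, (U1 t + 2*U t)^2*rB t)
      ≤ 2*(∫ t, (U1 t)^2*rr t) + 8*(∫ t, (U t)^2*rr t) := by
    have Isum : Integrable (fun t => 2*((U1 t)^2*rr t) + 8*((U t)^2*rr t)) := by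
      exact (I11.const_mul 2).add (I00.const_mul 8)
    calc (∫ t, (U1 t + 2*U t)^2*rB t)
        ≤ ∫ t, (2*((U1 t)^2*rr t) + 8*((U t)^2*rr t)) :=
          integral_mono IB Isum (fun t => ptB (U1 t) (U t) (rr t) (rB t) (rB_nonneg t)
            (rB_le_rr t))
      _ = 2*(∫ t, (U1 t)^2*rr t) + 8*(∫ t, (U t)^2*rr t) := by
          rw [integral_add (I11.const_mul 2) (I00.const_mul 8), integral_const_mul,
            integral_const_mul]
  have hD2 : (∫ t, (U t)^2*rB t) ≤ ∫ t, (U t)^2*rr t :=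
    integral_mono ID I00 (fun t => mul_le_mul_of_nonneg_left (rB_le_rr t) (sq_nonneg _))
  have hX0 : 0 ≤ ∫ t, (U2 t)^2*rr t :=
    integral_nonneg (fun t => mul_nonneg (sq_nonneg _) (rr_pos t).le)
  have hY0 : 0 ≤ ∫ t, (U1 t)^2*rr t :=
    integral_nonneg (fun t => mul_nonneg (sq_nonneg _) (rr_pos t).le)
  have hZ0 : 0 ≤ ∫ t, (U t)^2*rr t :=
    integral_nonneg (fun t => mul_nonneg (sq_nonneg _) (rr_pos t).le)
  have hW0 : 0 ≤ ∫ t, (U t)^2*sg t :=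
    integral_nonneg (fun t => mul_nonneg (sq_nonneg _) (sg_pos t).le)
  have hE0 : 0 ≤ ∫ y in Set.Ioi (0:ℝ), (deriv v y) ^ 2 / (1 + y ^ 6) * y := by
    apply setIntegral_nonneg measurableSet_Ioi
    intro y hy
    have h0 : (0:ℝ) < y := hy
    positivity
  have key := core U U1 U2 hcU hcU1 hcU2 hdU1 hdU2 hcsU
  rw [ge_iff_le, hLeq, hAeq, hBeq, hDeq, hFeq]
  linarith [key, hA2, hB2, hD2, hX0, hY0, hZ0, hW0, hE0]
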